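/- For every individual term t ∈ T^ι and every parameter assignment σ, the evaluation σ(t)↓_ι lies in T^ι₀, i.e., it is an ordinary first-order term containing no defined symbols and no parameters. -/

import Mathlib

namespace Schematic

/-- Numeric terms `T^ω`: built from `0̄`, parameters (indexed by `ℕ`), the successor `s`, and
defined numeric function symbols `f̂ ∈ F̂_ω` (the symbol type `F`), where `f̂ ∈ F` has arity
`ar f + 1`. -/
inductive NTerm (F : Type) (ar : F → ℕ) : Type where
  | zero : NTerm F ar
  | param : ℕ → NTerm F ar
  | succ : NTerm F ar → NTerm F ar
  | defd : (f : F) → (Fin (ar f + 1) → NTerm F ar) → NTerm F ar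

namespace NTerm

variable {F : Type} {ar : F → ℕ}

/-- The numeral `s^β(0̄)`. -/
def ofNat (F : Type) (ar : F → ℕ) : ℕ → NTerm F ar
  | 0 => zero
  | n + 1 => succ (ofNat F ar n)

/-- Homomorphic substitution of parameters. -/
def subst (σ : ℕ → NTerm F ar) : NTerm F ar → NTerm F ar
  | zero => zero
  | param n => σ n
  | succ t => succ (t.subst σ)
  | defd f ts => defd f fun i => (ts i).subst σ

/-- The parameter `n` occurs in the term. -/
def HasParam (n : ℕ) : NTerm F ar → Prop
  | zero => False
  | param m => m = n
  | succ t => t.HasParam n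
  | defd _ ts => ∃ i, (ts i).HasParam n

/-- The defined symbol `g` occurs in the term. -/
def HasSymb (g : F) : NTerm F ar → Prop
  | zero => False
  | param _ => False
  | succ t => t.HasSymb g
  | defd f ts => f = g ∨ ∃ i, (ts i).HasSymb g

/-- The term contains no defined function symbols (i.e. it belongs to `T^ω₀`). -/
def NoDefd : NTerm F ar → Prop
  | zero => True
  | param _ => True
  | succ t => t.NoDefd
  | defd _ _ => False

/-- The term is a numeral `s^β(0̄)`. -/
def IsNumeral : NTerm F ar → Prop
  | zero => True
  | param _ => False
  | succ t => t.IsNumeral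
  | defd _ _ => False

/-- Evaluation of defined-symbol-free numeric terms under a parameter assignment
(junk value `0` on defined symbols). -/
def eval0 (σ : ℕ → ℕ) : NTerm F ar → ℕ
  | zero => 0
  | param n => σ n
  | succ t => t.eval0 σ + 1
  | defd _ _ => 0

end NTerm

variable {F : Type} {ar : F → ℕ}

/-- The substitution sending parameter `n < k` to `ts n` and fixing all other parameters. -/
def cutSub (k : ℕ) (ts : Fin k → NTerm F ar) : ℕ → NTerm F ar := fun n =>
  if h : n < k then ts ⟨n, h⟩ else NTerm.param n

/-- Like `cutSub` but additionally sending the parameter `k` (the recursion parameter `m`)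
to `u`. -/
def cutSub2 (k : ℕ) (ts : Fin k → NTerm F ar) (u : NTerm F ar) : ℕ → NTerm F ar := fun n =>
  if h : n < k then ts ⟨n, h⟩ else if n = k then u else NTerm.param n

/-- Like `cutSub2` but additionally sending parameter `k + 1` (the placeholder `k` for the
recursive call) to `recc`. -/
def stepSub (k : ℕ) (ts : Fin k → NTerm F ar) (u recc : NTerm F ar) : ℕ → NTerm F ar := fun n =>
  if h : n < k then ts ⟨n, h⟩
  else if n = k then u
  else if n = k + 1 then recc
  else NTerm.param n

/-- Defining equations `D(f̂)` for the numeric defined symbols: for `f̂` of arity `α + 1`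
(`α = ar f̂`), `base f̂ = t_B` uses only the parameters `0,…,α-1` (standing for `n₁,…,n_α`) and
`step f̂ = t_S` uses only the parameters `0,…,α+1`, where parameter `α` stands for `m` and
parameter `α+1` stands for the placeholder `k` of the recursive call
`f̂(n₁,…,n_α,m)`. -/
structure NumDefs (F : Type) (ar : F → ℕ) where
  base : F → NTerm F ar
  step : F → NTerm F ar

/-- Wellformedness of the numeric defining equations with respect to the order `prec` on the
defined symbols: parameter conditions and the condition that all defined symbols occurring in
`t_B, t_S` are `prec`-smaller than `f̂`. -/
structure GoodNumDefs (prec : F → F → Prop) (D : NumDefs F ar) : Prop where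
  base_params : ∀ f n, (D.base f).HasParam n → n < ar f
  step_params : ∀ f n, (D.step f).HasParam n → n < ar f + 2
  base_symbs : ∀ f g, (D.base f).HasSymb g → prec g f
  step_symbs : ∀ f g, (D.step f).HasSymb g → prec g f

end Schematic
namespace Schematic

variable {F : Type} {ar : F → ℕ}

/-- The one-step rewrite relation `→_ω` generated by the rewrite system `R(F̂_ω)`,
obtained by orienting the defining equations from left to right; the rules are applicable
under arbitrary instantiation of the parameters and inside any term context. -/
inductive NStep (D : NumDefs F ar) : NTerm F ar → NTerm F ar → Prop where
  | baseRule (f : F) (ts : Fin (ar f) → NTerm F ar) :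
      NStep D (NTerm.defd f (Fin.snoc ts NTerm.zero)) ((D.base f).subst (cutSub (ar f) ts))
  | stepRule (f : F) (ts : Fin (ar f) → NTerm F ar) (u : NTerm F ar) :
      NStep D (NTerm.defd f (Fin.snoc ts (NTerm.succ u)))
        ((D.step f).subst (stepSub (ar f) ts u (NTerm.defd f (Fin.snoc ts u))))
  | succCong {t t' : NTerm F ar} : NStep D t t' → NStep D (NTerm.succ t) (NTerm.succ t')
  | argCong (f : F) (ts ts' : Fin (ar f + 1) → NTerm F ar) (i : Fin (ar f + 1)) :
      NStep D (ts i) (ts' i) → (∀ j, j ≠ i → ts j = ts' j) →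
      NStep D (NTerm.defd f ts) (NTerm.defd f ts')

end Schematic
namespace Schematic

/-- Individual terms `T^ι`: built from `ι`-constants (`C`), V-terms `X(t₁,…,t_α)` over global
variables `X ∈ G` of type `ω^{gar X} → ι` with numeric arguments, ordinary function
applications (`Fn` with arities `far`), and defined `ι`-function symbols `f̂ ∈ Fh` of type
`(ω^{gtys f̂ 1} → ι) × … × (ω^{gtys f̂ (gnum f̂)} → ι) × ω^{nar f̂ + 1} → ι`, applied to global
variables of matching types and numeric arguments. -/
inductive ITerm (F : Type) (ar : F → ℕ) (C : Type) (Fn : Type) (far : Fn → ℕ)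
    (G : Type) (gar : G → ℕ) (Fh : Type) (gnum : Fh → ℕ)
    (gtys : (h : Fh) → Fin (gnum h) → ℕ) (nar : Fh → ℕ) : Type where
  | const : C → ITerm F ar C Fn far G gar Fh gnum gtys nar
  | vterm : (X : G) → (Fin (gar X) → NTerm F ar) → ITerm F ar C Fn far G gar Fh gnum gtys nar
  | app : (f : Fn) → (Fin (far f) → ITerm F ar C Fn far G gar Fh gnum gtys nar) →
      ITerm F ar C Fn far G gar Fh gnum gtys nar
  | defd : (h : Fh) → (Xs : Fin (gnum h) → G) → (∀ i, gar (Xs i) = gtys h i) →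
      (Fin (nar h + 1) → NTerm F ar) → ITerm F ar C Fn far G gar Fh gnum gtys nar

variable {F : Type} {ar : F → ℕ} {C : Type} {Fn : Type} {far : Fn → ℕ}
  {G : Type} {gar : G → ℕ} {Fh : Type} {gnum : Fh → ℕ}
  {gtys : (h : Fh) → Fin (gnum h) → ℕ} {nar : Fh → ℕ}

/-- Instantiation of a term over formal constants `C'` and formal global variables `G'`:
constants are mapped by `cmap`, global variables are renamed along `ren` (type preserving by
`hren`) and the parameters are substituted by `σn`. -/
def ITerm.instC {C' : Type} {G' : Type} {gar' : G' → ℕ}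
    (cmap : C' → ITerm F ar C Fn far G gar Fh gnum gtys nar)
    (ren : G' → G) (hren : ∀ x, gar (ren x) = gar' x) (σn : ℕ → NTerm F ar) :
    ITerm F ar C' Fn far G' gar' Fh gnum gtys nar → ITerm F ar C Fn far G gar Fh gnum gtys nar
  | .const c => cmap c
  | .vterm x ns => .vterm (ren x) fun j => (ns (Fin.cast (hren x) j)).subst σn
  | .app f ss => .app f fun j => (ss j).instC cmap ren hren σn
  | .defd h Ys hty ns =>
      .defd h (fun i => ren (Ys i)) (fun i => (hren (Ys i)).trans (hty i)) fun j =>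
        (ns j).subst σn

/-- Defining equations `D(f̂)` for the defined `ι`-function symbols.  The bodies `t_B` and
`t_S` of `f̂` are terms whose global variables are the formal variables `X⃗` (represented by
`Fin (gnum f̂)` with arities `gtys f̂`), whose parameters stand for `n₁,…,n_{nar f̂}` (indices
`< nar f̂`) resp. additionally `m` (index `nar f̂`), and where the extra constant
`none : Option C` is the placeholder variable `Y : ι` for the recursive call. -/
structure IDefs (F : Type) (ar : F → ℕ) (C : Type) (Fn : Type) (far : Fn → ℕ)
    (Fh : Type) (gnum : Fh → ℕ) (gtys : (h : Fh) → Fin (gnum h) → ℕ) (nar : Fh → ℕ) where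
  base : (h : Fh) → ITerm F ar (Option C) Fn far (Fin (gnum h)) (gtys h) Fh gnum gtys nar
  step : (h : Fh) → ITerm F ar (Option C) Fn far (Fin (gnum h)) (gtys h) Fh gnum gtys nar

/-- Instantiation of a defining-equation body: the formal global variables are replaced by
`Xs`, the parameters are substituted by `σn`, and the placeholder `Y` is replaced by
`recv`. -/
def instBody {h : Fh} (Xs : Fin (gnum h) → G) (hty : ∀ i, gar (Xs i) = gtys h i)
    (σn : ℕ → NTerm F ar) (recv : ITerm F ar C Fn far G gar Fh gnum gtys nar)
    (body : ITerm F ar (Option C) Fn far (Fin (gnum h)) (gtys h) Fh gnum gtys nar) :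
    ITerm F ar C Fn far G gar Fh gnum gtys nar :=
  body.instC (fun o => Option.elim o recv fun c => ITerm.const c) Xs hty σn

/-- The parameter `n` occurs in the `ι`-term. -/
def ITerm.IHasParam (n : ℕ) : ITerm F ar C Fn far G gar Fh gnum gtys nar → Prop
  | .const _ => False
  | .vterm _ ns => ∃ j, (ns j).HasParam n
  | .app _ ss => ∃ j, (ss j).IHasParam n
  | .defd _ _ _ ns => ∃ j, (ns j).HasParam n

/-- The defined `ι`-symbol `h0` occurs in the `ι`-term. -/
def ITerm.IHasIDef (h0 : Fh) : ITerm F ar C Fn far G gar Fh gnum gtys nar → Prop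
  | .const _ => False
  | .vterm _ _ => False
  | .app _ ss => ∃ j, (ss j).IHasIDef h0
  | .defd h _ _ _ => h = h0

/-- The constant `c` occurs in the `ι`-term. -/
def ITerm.IHasConst (c : C) : ITerm F ar C Fn far G gar Fh gnum gtys nar → Prop
  | .const c' => c' = c
  | .vterm _ _ => False
  | .app _ ss => ∃ j, (ss j).IHasConst c
  | .defd _ _ _ _ => False

/-- Wellformedness of the `ι` defining equations with respect to the order `precI` on the
defined `ι`-symbols: all defined `ι`-symbols occurring in the bodies are `precI`-smaller,
the parameters of `t_B` are among `n₁,…,n_β`, the parameters of `t_S` are among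
`n₁,…,n_β, m`, and `t_B` does not contain the placeholder `Y`. -/
structure GoodIDefs (precI : Fh → Fh → Prop) (DI : IDefs F ar C Fn far Fh gnum gtys nar) :
    Prop where
  base_params : ∀ h n, (DI.base h).IHasParam n → n < nar h
  step_params : ∀ h n, (DI.step h).IHasParam n → n < nar h + 1
  base_symbs : ∀ h h', (DI.base h).IHasIDef h' → precI h' h
  step_symbs : ∀ h h', (DI.step h).IHasIDef h' → precI h' h
  base_noY : ∀ h, ¬ (DI.base h).IHasConst (none : Option C)

end Schematic
namespace Schematic

variable {F : Type} {ar : F → ℕ} {C : Type} {Fn : Type} {far : Fn → ℕ}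
  {G : Type} {gar : G → ℕ} {Fh : Type} {gnum : Fh → ℕ}
  {gtys : (h : Fh) → Fin (gnum h) → ℕ} {nar : Fh → ℕ}

/-- The one-step rewrite relation `→_ι` generated by the rewrite system `R(F̂_ι)`, obtained by
orienting the defining equations of the defined `ι`-function symbols from left to right. -/
inductive IStep (DI : IDefs F ar C Fn far Fh gnum gtys nar) :
    ITerm F ar C Fn far G gar Fh gnum gtys nar →
    ITerm F ar C Fn far G gar Fh gnum gtys nar → Prop where
  | baseRule (h : Fh) (Xs : Fin (gnum h) → G) (hty : ∀ i, gar (Xs i) = gtys h i)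
      (ts : Fin (nar h) → NTerm F ar) :
      IStep DI (ITerm.defd h Xs hty (Fin.snoc ts NTerm.zero))
        (instBody Xs hty (cutSub (nar h) ts)
          (ITerm.defd h Xs hty (Fin.snoc ts NTerm.zero)) (DI.base h))
  | stepRule (h : Fh) (Xs : Fin (gnum h) → G) (hty : ∀ i, gar (Xs i) = gtys h i)
      (ts : Fin (nar h) → NTerm F ar) (u : NTerm F ar) :
      IStep DI (ITerm.defd h Xs hty (Fin.snoc ts (NTerm.succ u)))
        (instBody Xs hty (cutSub2 (nar h) ts u)
          (ITerm.defd h Xs hty (Fin.snoc ts u)) (DI.step h))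
  | appCong (f : Fn) (ss ss' : Fin (far f) → ITerm F ar C Fn far G gar Fh gnum gtys nar)
      (i : Fin (far f)) :
      IStep DI (ss i) (ss' i) → (∀ j, j ≠ i → ss j = ss' j) →
      IStep DI (ITerm.app f ss) (ITerm.app f ss')

end Schematic
namespace Schematic

variable {F : Type} {ar : F → ℕ} {C : Type} {Fn : Type} {far : Fn → ℕ}
  {G : Type} {gar : G → ℕ} {Fh : Type} {gnum : Fh → ℕ}
  {gtys : (h : Fh) → Fin (gnum h) → ℕ} {nar : Fh → ℕ}

/-- Application of a parameter substitution to all numeric positions of an `ι`-term. -/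
def ITerm.substParams (σn : ℕ → NTerm F ar) :
    ITerm F ar C Fn far G gar Fh gnum gtys nar → ITerm F ar C Fn far G gar Fh gnum gtys nar
  | .const c => .const c
  | .vterm X ns => .vterm X fun j => (ns j).subst σn
  | .app f ss => .app f fun j => (ss j).substParams σn
  | .defd h Xs hty ns => .defd h Xs hty fun j => (ns j).subst σn

/-- The combination of the rewrite relations `→_ω` (applied inside the numeric positions of an
`ι`-term) and `→_ι`, used to evaluate `ι`-terms. -/
inductive CStep (D : NumDefs F ar) (DI : IDefs F ar C Fn far Fh gnum gtys nar) :
    ITerm F ar C Fn far G gar Fh gnum gtys nar →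
    ITerm F ar C Fn far G gar Fh gnum gtys nar → Prop where
  | ofIStep {t t' : ITerm F ar C Fn far G gar Fh gnum gtys nar} :
      IStep DI t t' → CStep D DI t t'
  | vtermArg (X : G) (ns ns' : Fin (gar X) → NTerm F ar) (i : Fin (gar X)) :
      NStep D (ns i) (ns' i) → (∀ j, j ≠ i → ns j = ns' j) →
      CStep D DI (ITerm.vterm X ns) (ITerm.vterm X ns')
  | defdArg (h : Fh) (Xs : Fin (gnum h) → G) (hty : ∀ i, gar (Xs i) = gtys h i)
      (ns ns' : Fin (nar h + 1) → NTerm F ar) (i : Fin (nar h + 1)) :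
      NStep D (ns i) (ns' i) → (∀ j, j ≠ i → ns j = ns' j) →
      CStep D DI (ITerm.defd h Xs hty ns) (ITerm.defd h Xs hty ns')
  | appCong (f : Fn) (ss ss' : Fin (far f) → ITerm F ar C Fn far G gar Fh gnum gtys nar)
      (i : Fin (far f)) :
      CStep D DI (ss i) (ss' i) → (∀ j, j ≠ i → ss j = ss' j) →
      CStep D DI (ITerm.app f ss) (ITerm.app f ss')

/-- Membership in `T^ι₀`: an ordinary first-order term, containing no defined symbols and no
parameters (all numeric arguments are numerals). -/
def ITerm.IsT0 : ITerm F ar C Fn far G gar Fh gnum gtys nar → Prop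
  | .const _ => True
  | .vterm _ ns => ∀ j, (ns j).IsNumeral
  | .app _ ss => ∀ j, (ss j).IsT0
  | .defd _ _ _ _ => False

end Schematic

namespace Schematic

section Aux

variable {F : Type} {ar : F → ℕ} {C : Type} {Fn : Type} {far : Fn → ℕ}
  {G : Type} {gar : G → ℕ} {Fh : Type} {gnum : Fh → ℕ}
  {gtys : (h : Fh) → Fin (gnum h) → ℕ} {nar : Fh → ℕ}

/-- Generic lifting of pointwise many-step rewriting of a tuple to many-step rewriting
of a term built from that tuple, given a one-position congruence rule. -/
lemma tuple_lift {α β : Type _} {n : ℕ} {step : α → α → Prop} {lift : β → β → Prop}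
    (Fm : (Fin n → α) → β)
    (hcong : ∀ (ts ts' : Fin n → α) (i : Fin n), step (ts i) (ts' i) →
      (∀ j, j ≠ i → ts j = ts' j) → lift (Fm ts) (Fm ts'))
    {ns ms : Fin n → α} (h : ∀ j, Relation.ReflTransGen step (ns j) (ms j)) :
    Relation.ReflTransGen lift (Fm ns) (Fm ms) := by
  have one : ∀ (ts : Fin n → α) (i : Fin n) (b : α),
      Relation.ReflTransGen step (ts i) b →
      Relation.ReflTransGen lift (Fm ts) (Fm (Function.update ts i b)) := by
    intro ts i b hb
    induction hb with
    | refl =>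
      have : Function.update ts i (ts i) = ts := Function.update_eq_self i ts
      rw [this]
    | tail hxc hcb ih =>
      refine ih.tail (hcong _ _ i ?_ ?_)
      · simpa using hcb
      · intro j hj; simp [Function.update_of_ne hj]
  have key : ∀ k : ℕ, Relation.ReflTransGen lift (Fm ns)
      (Fm fun j => if j.val < k then ms j else ns j) := by
    intro k
    induction k with
    | zero =>
      have heq0 : (fun j : Fin n => if j.val < 0 then ms j else ns j) = ns := by
        funext j; simp
      rw [heq0]
    | succ k ih =>
      by_cases hk : k < n
      · have heq : (fun j : Fin n => if j.val < k + 1 then ms j else ns j)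
            = Function.update (fun j : Fin n => if j.val < k then ms j else ns j)
                ⟨k, hk⟩ (ms ⟨k, hk⟩) := by
          funext j
          rcases eq_or_ne j ⟨k, hk⟩ with rfl | hj
          · simp
          · have hjv : j.val ≠ k := fun hc => hj (Fin.ext hc)
            rw [Function.update_of_ne hj]
            exact if_congr (by omega) rfl rfl
        rw [heq]
        refine ih.trans (one _ ⟨k, hk⟩ (ms ⟨k, hk⟩) ?_)
        simpa using h ⟨k, hk⟩
      · have heq : (fun j : Fin n => if j.val < k + 1 then ms j else ns j)
            = fun j : Fin n => if j.val < k then ms j else ns j := by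
          funext j
          have h1 : j.val < k := by have := j.isLt; omega
          have h2 : j.val < k + 1 := by omega
          simp [h1, h2]
        rw [heq]; exact ih
  have := key n
  have heq : (fun j : Fin n => if j.val < n then ms j else ns j) = ms := by
    funext j; simp [j.isLt]
  rwa [heq] at this

lemma ofNat_isNumeral : ∀ m, (NTerm.ofNat F ar m).IsNumeral
  | 0 => trivial
  | m + 1 => ofNat_isNumeral m

variable (D : NumDefs F ar)

lemma nstep_not_numeral {t t' : NTerm F ar} (h : NStep D t t') : ¬ t.IsNumeral := by
  induction h with
  | baseRule f ts => exact fun h => h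
  | stepRule f ts u => exact fun h => h
  | succCong _ ih => exact ih
  | argCong f ts ts' i _ _ => exact fun h => h

/-- A numeric defined symbol is "good" if applied to numerals it normalizes to a numeral. -/
def GoodN (f : F) : Prop :=
  ∀ ks : Fin (ar f + 1) → ℕ, ∃ m, Relation.ReflTransGen (NStep D)
    (NTerm.defd f fun i => NTerm.ofNat F ar (ks i)) (NTerm.ofNat F ar m)

lemma norm_subst (t : NTerm F ar) (σn : ℕ → NTerm F ar)
    (hp : ∀ n, t.HasParam n → ∃ m,
      Relation.ReflTransGen (NStep D) (σn n) (NTerm.ofNat F ar m))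
    (hs : ∀ g, t.HasSymb g → GoodN D g) :
    ∃ m, Relation.ReflTransGen (NStep D) (t.subst σn) (NTerm.ofNat F ar m) := by
  induction t with
  | zero => exact ⟨0, .refl⟩
  | param n => exact hp n rfl
  | succ t ih =>
    obtain ⟨m, hm⟩ := ih hp hs
    exact ⟨m + 1, Relation.ReflTransGen.lift NTerm.succ
      (fun _ _ h => NStep.succCong h) _ _ hm⟩
  | defd f ts ih =>
    have h1 : ∀ i, ∃ m, Relation.ReflTransGen (NStep D) ((ts i).subst σn)
        (NTerm.ofNat F ar m) :=
      fun i => ih i (fun n hn => hp n ⟨i, hn⟩) (fun g hg => hs g (Or.inr ⟨i, hg⟩))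
    choose ks hks using h1
    have h2 : Relation.ReflTransGen (NStep D)
        (NTerm.defd f fun i => (ts i).subst σn)
        (NTerm.defd f fun i => NTerm.ofNat F ar (ks i)) :=
      tuple_lift (NTerm.defd f) (fun a b i hi hj => NStep.argCong f a b i hi hj) hks
    obtain ⟨m, hm⟩ := hs f (Or.inl rfl) ks
    exact ⟨m, h2.trans hm⟩

lemma goodN_all {prec : F → F → Prop} (hwf : WellFounded prec)
    (hD : GoodNumDefs prec D) : ∀ f, GoodN D f := by
  intro f
  induction f using WellFounded.induction hwf with
  | _ f IH =>
    have main : ∀ (k : ℕ) (ts0 : Fin (ar f) → ℕ), ∃ m, Relation.ReflTransGen (NStep D)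
        (NTerm.defd f (Fin.snoc (fun i => NTerm.ofNat F ar (ts0 i)) (NTerm.ofNat F ar k)))
        (NTerm.ofNat F ar m) := by
      intro k
      induction k with
      | zero =>
        intro ts0
        set nts : Fin (ar f) → NTerm F ar := fun i => NTerm.ofNat F ar (ts0 i) with hnts
        have step1 : NStep D (NTerm.defd f (Fin.snoc nts NTerm.zero))
            ((D.base f).subst (cutSub (ar f) nts)) := NStep.baseRule f nts
        obtain ⟨m, hm⟩ := norm_subst D (D.base f) (cutSub (ar f) nts)
          (fun n hn => by
            have hlt : n < ar f := hD.base_params f n hn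
            refine ⟨ts0 ⟨n, hlt⟩, ?_⟩
            simp only [cutSub, hlt, dif_pos]
            exact Relation.ReflTransGen.refl)
          (fun g hg => IH g (hD.base_symbs f g hg))
        exact ⟨m, Relation.ReflTransGen.head step1 hm⟩
      | succ k ihk =>
        intro ts0
        set nts : Fin (ar f) → NTerm F ar := fun i => NTerm.ofNat F ar (ts0 i) with hnts
        have step1 : NStep D (NTerm.defd f (Fin.snoc nts (NTerm.succ (NTerm.ofNat F ar k))))
            ((D.step f).subst (stepSub (ar f) nts (NTerm.ofNat F ar k)
              (NTerm.defd f (Fin.snoc nts (NTerm.ofNat F ar k))))) :=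
          NStep.stepRule f nts (NTerm.ofNat F ar k)
        obtain ⟨m, hm⟩ := norm_subst D (D.step f)
          (stepSub (ar f) nts (NTerm.ofNat F ar k)
            (NTerm.defd f (Fin.snoc nts (NTerm.ofNat F ar k))))
          (fun n hn => by
            have hlt : n < ar f + 2 := hD.step_params f n hn
            rcases Nat.lt_or_ge n (ar f) with h1 | h1
            · refine ⟨ts0 ⟨n, h1⟩, ?_⟩
              simp only [stepSub, h1, dif_pos]
              exact Relation.ReflTransGen.refl
            · rcases Nat.eq_or_lt_of_le h1 with h2 | h2
              · refine ⟨k, ?_⟩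
                simp only [stepSub, dif_neg (by omega : ¬ n < ar f), if_pos h2.symm]
                exact Relation.ReflTransGen.refl
              · have h3 : n = ar f + 1 := by omega
                obtain ⟨m', hm'⟩ := ihk ts0
                refine ⟨m', ?_⟩
                simp only [stepSub, dif_neg (by omega : ¬ n < ar f),
                  if_neg (by omega : ¬ n = ar f), if_pos h3]
                exact hm')
          (fun g hg => IH g (hD.step_symbs f g hg))
        exact ⟨m, Relation.ReflTransGen.head step1 hm⟩
    intro ks
    have := main (ks (Fin.last (ar f))) (fun i => ks i.castSucc)
    have heq : (Fin.snoc (fun i : Fin (ar f) => NTerm.ofNat F ar (ks i.castSucc))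
        (NTerm.ofNat F ar (ks (Fin.last (ar f)))) : Fin (ar f + 1) → NTerm F ar)
        = fun i => NTerm.ofNat F ar (ks i) := by
      funext i
      induction i using Fin.lastCases with
      | last => simp
      | cast i => simp
    rwa [heq] at this

variable (DI : IDefs F ar C Fn far Fh gnum gtys nar)

lemma istep_not_t0 {t t' : ITerm F ar C Fn far G gar Fh gnum gtys nar}
    (h : IStep DI t t') : ¬ t.IsT0 := by
  induction h with
  | baseRule => exact fun h => h
  | stepRule => exact fun h => h
  | appCong f ss ss' i _ _ ih => exact fun h => ih (h i)

lemma cstep_not_t0 {t t' : ITerm F ar C Fn far G gar Fh gnum gtys nar}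
    (h : CStep D DI t t') : ¬ t.IsT0 := by
  induction h with
  | ofIStep h => exact istep_not_t0 DI h
  | vtermArg X ns ns' i hi _ => exact fun h => nstep_not_numeral D hi (h i)
  | defdArg => exact fun h => h
  | appCong f ss ss' i _ _ ih => exact fun h => ih (h i)

/-- Normalizability to a `T^ι₀` term. -/
def NormI (t : ITerm F ar C Fn far G gar Fh gnum gtys nar) : Prop :=
  ∃ u, Relation.ReflTransGen (CStep D DI) t u ∧ u.IsT0

/-- A defined `ι`-symbol is "good" if applied to numerals it normalizes. -/
def GoodI (h : Fh) : Prop :=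
  ∀ (Xs : Fin (gnum h) → G) (hty : ∀ i, gar (Xs i) = gtys h i)
    (ks : Fin (nar h + 1) → ℕ),
    NormI D DI (ITerm.defd h Xs hty fun i => NTerm.ofNat F ar (ks i))

lemma normI_instC {C' G' : Type} {gar' : G' → ℕ}
    (gN : ∀ f, GoodN D f)
    (t : ITerm F ar C' Fn far G' gar' Fh gnum gtys nar)
    (cmap : C' → ITerm F ar C Fn far G gar Fh gnum gtys nar) (ren : G' → G)
    (hren : ∀ x, gar (ren x) = gar' x) (σn : ℕ → NTerm F ar)
    (hc : ∀ c, t.IHasConst c → NormI D DI (cmap c))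
    (hp : ∀ n, t.IHasParam n → ∃ m,
      Relation.ReflTransGen (NStep D) (σn n) (NTerm.ofNat F ar m))
    (hs : ∀ h', t.IHasIDef h' → GoodI D DI (G := G) (gar := gar) h') :
    NormI D DI (t.instC cmap ren hren σn) := by
  induction t with
  | const c => exact hc c rfl
  | vterm x ns =>
    have h1 : ∀ j : Fin (gar (ren x)), ∃ m, Relation.ReflTransGen (NStep D)
        ((ns (Fin.cast (hren x) j)).subst σn) (NTerm.ofNat F ar m) :=
      fun j => norm_subst D _ σn (fun n hn => hp n ⟨_, hn⟩) (fun g _ => gN g)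
    choose ks hks using h1
    refine ⟨ITerm.vterm (ren x) fun j => NTerm.ofNat F ar (ks j), ?_, ?_⟩
    · exact tuple_lift (ITerm.vterm (ren x))
        (fun a b i hi hj => CStep.vtermArg (ren x) a b i hi hj) hks
    · exact fun j => ofNat_isNumeral (ks j)
  | app f ss ih =>
    have h1 : ∀ j, NormI D DI ((ss j).instC cmap ren hren σn) := fun j =>
      ih j (fun c hcc => hc c ⟨j, hcc⟩) (fun n hn => hp n ⟨j, hn⟩)
        (fun h' hh => hs h' ⟨j, hh⟩)
    choose us hrt ht0 using h1
    exact ⟨ITerm.app f us,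
      tuple_lift (ITerm.app f) (fun a b i hi hj => CStep.appCong f a b i hi hj) hrt,
      fun j => ht0 j⟩
  | defd h Ys hty ns =>
    have h1 : ∀ j, ∃ m, Relation.ReflTransGen (NStep D) ((ns j).subst σn)
        (NTerm.ofNat F ar m) :=
      fun j => norm_subst D _ σn (fun n hn => hp n ⟨j, hn⟩) (fun g _ => gN g)
    choose ks hks using h1
    have h2 : Relation.ReflTransGen (CStep D DI)
        (ITerm.defd h (fun i => ren (Ys i))
          (fun i => (hren (Ys i)).trans (hty i)) fun j => (ns j).subst σn)
        (ITerm.defd h (fun i => ren (Ys i))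
          (fun i => (hren (Ys i)).trans (hty i)) fun j => NTerm.ofNat F ar (ks j)) :=
      tuple_lift (ITerm.defd h (fun i => ren (Ys i)) (fun i => (hren (Ys i)).trans (hty i)))
        (fun a b i hi hj => CStep.defdArg h _ _ a b i hi hj) hks
    obtain ⟨u, hu, ht0⟩ := hs h rfl (fun i => ren (Ys i))
      (fun i => (hren (Ys i)).trans (hty i)) ks
    exact ⟨u, h2.trans hu, ht0⟩

lemma goodI_all {precI : Fh → Fh → Prop} (hwfI : WellFounded precI)
    (hDI : GoodIDefs precI DI) (gN : ∀ f, GoodN D f) :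
    ∀ h, GoodI D DI (G := G) (gar := gar) h := by
  intro h
  induction h using WellFounded.induction hwfI with
  | _ h IH =>
    have main : ∀ (k : ℕ) (ts0 : Fin (nar h) → ℕ) (Xs : Fin (gnum h) → G)
        (hty : ∀ i, gar (Xs i) = gtys h i),
        NormI D DI (ITerm.defd h Xs hty
          (Fin.snoc (fun i => NTerm.ofNat F ar (ts0 i)) (NTerm.ofNat F ar k))) := by
      intro k
      induction k with
      | zero =>
        intro ts0 Xs hty
        set nts : Fin (nar h) → NTerm F ar := fun i => NTerm.ofNat F ar (ts0 i) with hnts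
        have step1 : CStep D DI (ITerm.defd h Xs hty (Fin.snoc nts NTerm.zero))
            (instBody Xs hty (cutSub (nar h) nts)
              (ITerm.defd h Xs hty (Fin.snoc nts NTerm.zero)) (DI.base h)) :=
          CStep.ofIStep (IStep.baseRule h Xs hty nts)
        obtain ⟨u, hu, ht0⟩ := normI_instC D DI gN (DI.base h)
          (fun o => Option.elim o (ITerm.defd h Xs hty (Fin.snoc nts NTerm.zero))
            fun c => ITerm.const c) Xs hty
          (cutSub (nar h) nts)
          (fun c hcc => by
            cases c with
            | none => exact absurd hcc (hDI.base_noY h)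
            | some c' => exact ⟨ITerm.const c', Relation.ReflTransGen.refl, trivial⟩)
          (fun n hn => by
            have hlt : n < nar h := hDI.base_params h n hn
            refine ⟨ts0 ⟨n, hlt⟩, ?_⟩
            simp only [cutSub, hlt, dif_pos]
            exact Relation.ReflTransGen.refl)
          (fun h' hh => IH h' (hDI.base_symbs h h' hh))
        exact ⟨u, Relation.ReflTransGen.head step1 hu, ht0⟩
      | succ k ihk =>
        intro ts0 Xs hty
        set nts : Fin (nar h) → NTerm F ar := fun i => NTerm.ofNat F ar (ts0 i) with hnts
        have step1 : CStep D DI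
            (ITerm.defd h Xs hty (Fin.snoc nts (NTerm.succ (NTerm.ofNat F ar k))))
            (instBody Xs hty (cutSub2 (nar h) nts (NTerm.ofNat F ar k))
              (ITerm.defd h Xs hty (Fin.snoc nts (NTerm.ofNat F ar k))) (DI.step h)) :=
          CStep.ofIStep (IStep.stepRule h Xs hty nts (NTerm.ofNat F ar k))
        obtain ⟨u, hu, ht0⟩ := normI_instC D DI gN (DI.step h)
          (fun o => Option.elim o (ITerm.defd h Xs hty (Fin.snoc nts (NTerm.ofNat F ar k)))
            fun c => ITerm.const c) Xs hty
          (cutSub2 (nar h) nts (NTerm.ofNat F ar k))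
          (fun c hcc => by
            cases c with
            | none => exact ihk ts0 Xs hty
            | some c' => exact ⟨ITerm.const c', Relation.ReflTransGen.refl, trivial⟩)
          (fun n hn => by
            have hlt : n < nar h + 1 := hDI.step_params h n hn
            rcases Nat.lt_or_ge n (nar h) with h1 | h1
            · refine ⟨ts0 ⟨n, h1⟩, ?_⟩
              simp only [cutSub2, h1, dif_pos]
              exact Relation.ReflTransGen.refl
            · have h2 : n = nar h := by omega
              refine ⟨k, ?_⟩
              simp only [cutSub2, dif_neg (by omega : ¬ n < nar h), if_pos h2]
              exact Relation.ReflTransGen.refl)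
          (fun h' hh => IH h' (hDI.step_symbs h h' hh))
        exact ⟨u, Relation.ReflTransGen.head step1 hu, ht0⟩
    intro Xs hty ks
    have := main (ks (Fin.last (nar h))) (fun i => ks i.castSucc) Xs hty
    have heq : (Fin.snoc (fun i : Fin (nar h) => NTerm.ofNat F ar (ks i.castSucc))
        (NTerm.ofNat F ar (ks (Fin.last (nar h)))) : Fin (nar h + 1) → NTerm F ar)
        = fun i => NTerm.ofNat F ar (ks i) := by
      funext i
      induction i using Fin.lastCases with
      | last => simp
      | cast i => simp
    rwa [heq] at this

lemma normI_substParams (gN : ∀ f, GoodN D f)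
    (gI : ∀ h, GoodI D DI (G := G) (gar := gar) h)
    (t : ITerm F ar C Fn far G gar Fh gnum gtys nar) (σ : ℕ → ℕ) :
    NormI D DI (t.substParams fun n => NTerm.ofNat F ar (σ n)) := by
  induction t with
  | const c => exact ⟨ITerm.const c, Relation.ReflTransGen.refl, trivial⟩
  | vterm x ns =>
    have h1 : ∀ j, ∃ m, Relation.ReflTransGen (NStep D)
        ((ns j).subst fun n => NTerm.ofNat F ar (σ n)) (NTerm.ofNat F ar m) :=
      fun j => norm_subst D _ _ (fun n _ => ⟨σ n, Relation.ReflTransGen.refl⟩)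
        (fun g _ => gN g)
    choose ks hks using h1
    refine ⟨ITerm.vterm x fun j => NTerm.ofNat F ar (ks j), ?_, ?_⟩
    · exact tuple_lift (ITerm.vterm x)
        (fun a b i hi hj => CStep.vtermArg x a b i hi hj) hks
    · exact fun j => ofNat_isNumeral (ks j)
  | app f ss ih =>
    choose us hrt ht0 using fun j => ih j
    exact ⟨ITerm.app f us,
      tuple_lift (ITerm.app f) (fun a b i hi hj => CStep.appCong f a b i hi hj) hrt,
      fun j => ht0 j⟩
  | defd h Xs hty ns =>
    have h1 : ∀ j, ∃ m, Relation.ReflTransGen (NStep D)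
        ((ns j).subst fun n => NTerm.ofNat F ar (σ n)) (NTerm.ofNat F ar m) :=
      fun j => norm_subst D _ _ (fun n _ => ⟨σ n, Relation.ReflTransGen.refl⟩)
        (fun g _ => gN g)
    choose ks hks using h1
    have h2 : Relation.ReflTransGen (CStep D DI)
        (ITerm.defd h Xs hty fun j => (ns j).subst fun n => NTerm.ofNat F ar (σ n))
        (ITerm.defd h Xs hty fun j => NTerm.ofNat F ar (ks j)) :=
      tuple_lift (ITerm.defd h Xs hty)
        (fun a b i hi hj => CStep.defdArg h Xs hty a b i hi hj) hks
    obtain ⟨u, hu, ht0⟩ := gI h Xs hty ks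
    exact ⟨u, h2.trans hu, ht0⟩

end Aux

end Schematic

open Schematic

/-- For every individual term `t ∈ T^ι` and every parameter assignment `σ`, the
evaluation `σ(t)↓_ι` lies in `T^ι₀`: applying `σ` and normalizing under the combined rewriting
(`→_ω` inside numeric positions together with `→_ι`) yields a normal form which is an ordinary
first-order term, containing no defined symbols and no parameters. -/
theorem statement3 (F : Type) (ar : F → ℕ) (prec : F → F → Prop)
    (hirr : ∀ f, ¬ prec f f) (htrans : Transitive prec) (hwf : WellFounded prec)
    (D : NumDefs F ar) (hD : GoodNumDefs prec D)
    (C Fn : Type) (far : Fn → ℕ) (G : Type) (gar : G → ℕ)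
    (Fh : Type) (gnum : Fh → ℕ) (gtys : (h : Fh) → Fin (gnum h) → ℕ) (nar : Fh → ℕ)
    (precI : Fh → Fh → Prop)
    (hirrI : ∀ h, ¬ precI h h) (htransI : Transitive precI) (hwfI : WellFounded precI)
    (DI : IDefs F ar C Fn far Fh gnum gtys nar) (hDI : GoodIDefs precI DI)
    (t : ITerm F ar C Fn far G gar Fh gnum gtys nar) (σ : ℕ → ℕ) :
    ∃ u : ITerm F ar C Fn far G gar Fh gnum gtys nar,
      Relation.ReflTransGen (CStep D DI) (t.substParams fun n => NTerm.ofNat F ar (σ n)) u ∧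
      (¬ ∃ v, CStep D DI u v) ∧ u.IsT0 := by
  have gN := Schematic.goodN_all D hwf hD
  have gI := Schematic.goodI_all D DI hwfI hDI gN (G := G) (gar := gar)
  obtain ⟨u, hu, ht0⟩ := Schematic.normI_substParams D DI gN gI t σ
  exact ⟨u, hu, fun ⟨v, hv⟩ => Schematic.cstep_not_t0 D DI hv ht0, ht0⟩
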